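/- Let k, l, m be natural numbers with m > l. If there is a finite-to-one map σ : [ω_{k+1}]^{m+1} → [ω_{k+1}]^{l+1} with σ(x) ⊆ x for all x, then there is a set Y of cardinality ℵ_k and a finite-to-one map ς : [Y]^m → [Y]^l with ς(x) ⊆ x for all x. In other words, an (m+1)→(l+1) monotone compression scheme on a set of size ℵ_{k+1} yields an m→l monotone compression scheme on a set of size ℵ_k. -/

import Mathlib

open Cardinal Set

universe u v

lemma finset_subtype_inj {p : Ordinal.{u} → Prop} [DecidablePred p] {s t : Finset Ordinal.{u}}
    (hs : ∀ a ∈ s, p a) (ht : ∀ a ∈ t, p a) (h : s.subtype p = t.subtype p) : s = t := by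
  have := congrArg (Finset.map (Function.Embedding.subtype p)) h
  rwa [Finset.subtype_map, Finset.subtype_map, Finset.filter_true_of_mem hs,
    Finset.filter_true_of_mem ht] at this

lemma core_compression (k l m : ℕ) (hml : m > l)
    (σ : Finset Ordinal.{u} → Finset Ordinal.{u})
    (hσ : ∀ s : Finset Ordinal.{u}, s.card = m + 1 →
      (s : Set Ordinal.{u}) ⊆ Set.Iio (Cardinal.aleph.{u} (k + 1)).ord →
      σ s ⊆ s ∧ (σ s).card = l + 1)
    (hfin : ∀ B : Finset Ordinal.{u},
      {s : Finset Ordinal.{u} | s.card = m + 1 ∧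
        (s : Set Ordinal.{u}) ⊆ Set.Iio (Cardinal.aleph.{u} (k + 1)).ord ∧ σ s = B}.Finite) :
    ∃ Y : Set Ordinal.{u}, Cardinal.mk Y = Cardinal.aleph.{u+1} k ∧
      ∃ ς : Finset Ordinal.{u} → Finset Ordinal.{u},
        (∀ s : Finset Ordinal.{u}, s.card = m → (s : Set Ordinal.{u}) ⊆ Y →
          ς s ⊆ s ∧ (ς s).card = l) ∧
        ∀ B : Finset Ordinal.{u},
          {s : Finset Ordinal.{u} | s.card = m ∧ (s : Set Ordinal.{u}) ⊆ Y ∧ ς s = B}.Finite := by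
  classical
  set α : Ordinal.{u} := (Cardinal.aleph.{u} k).ord with hα
  set β : Ordinal.{u} := (Cardinal.aleph.{u} (k + 1)).ord with hβ
  have hαβ : α < β := by
    rw [hα, hβ, Cardinal.ord_lt_ord]
    exact Cardinal.aleph_lt_aleph.mpr (by exact_mod_cast Nat.lt_succ_self k)
  have hio : Set.Iio α ⊆ Set.Iio β := fun x hx => lt_trans hx hαβ
  have hmkIio : Cardinal.mk (Set.Iio α) = Cardinal.aleph.{u+1} k := by
    simp [hα, Ordinal.mk_Iio_ordinal]
  have hinfIio : Infinite (Set.Iio α) := by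
    rw [Cardinal.infinite_iff, hmkIio]
    exact Cardinal.aleph0_le_aleph _
  have key : ∃ δ : Ordinal.{u}, α ≤ δ ∧ δ < β ∧
      ∀ s : Finset Ordinal.{u}, s.card = m → (s : Set Ordinal.{u}) ⊆ Set.Iio α →
        δ ∈ σ (insert δ s) := by
    by_contra hcon
    push_neg at hcon
    have hch : ∀ δ : Set.Ico α β, ∃ s : Finset Ordinal.{u}, s.card = m ∧
        (s : Set Ordinal.{u}) ⊆ Set.Iio α ∧ (δ : Ordinal) ∉ σ (insert (δ : Ordinal) s) := by
      rintro ⟨δ, hδ1, hδ2⟩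
      exact hcon δ hδ1 hδ2
    choose x hx1 hx2 hx3 using hch
    have hσsub : ∀ δ : Set.Ico α β,
        (↑(σ (insert (δ : Ordinal) (x δ))) : Set Ordinal) ⊆ Set.Iio α := by
      intro δ
      have hcard : (insert (δ : Ordinal) (x δ)).card = m + 1 := by
        rw [Finset.card_insert_of_notMem, hx1]
        intro hmem
        exact absurd (hx2 δ hmem) (not_lt.mpr δ.2.1)
      have hsub : (↑(insert (δ : Ordinal) (x δ)) : Set Ordinal) ⊆ Set.Iio β := by
        intro a ha
        simp only [Finset.coe_insert, Set.mem_insert_iff] at ha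
        rcases ha with rfl | ha
        · exact δ.2.2
        · exact hio (hx2 δ ha)
      have h1 := (hσ _ hcard hsub).1
      intro a ha
      have := h1 ha
      rw [Finset.mem_insert] at this
      rcases this with rfl | hmem
      · exact absurd ha (hx3 δ)
      · exact hx2 δ hmem
    set f : Set.Ico α β → Finset (Set.Iio α) × Finset (Set.Iio α) :=
      fun δ => ((x δ).subtype (· ∈ Set.Iio α),
        (σ (insert (δ : Ordinal) (x δ))).subtype (· ∈ Set.Iio α)) with hf
    have hcodom : Cardinal.mk (Finset (Set.Iio α) × Finset (Set.Iio α)) =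
        Cardinal.aleph.{u+1} k := by
      rw [Cardinal.mk_prod, Cardinal.mk_finset_of_infinite, hmkIio]
      simpa using Cardinal.mul_eq_self (Cardinal.aleph0_le_aleph _)
    have hdom : Cardinal.aleph.{u+1} (k + 1) ≤ Cardinal.mk (Set.Ico α β) := by
      by_contra hle
      push_neg at hle
      have hunion : Set.Iio β ⊆ Set.Iio α ∪ Set.Ico α β := by
        intro a ha
        rcases lt_or_ge a α with h | h
        · exact Or.inl h
        · exact Or.inr ⟨h, ha⟩
      have h1 : Cardinal.mk (Set.Iio β) ≤ Cardinal.mk (Set.Iio α) + Cardinal.mk (Set.Ico α β) :=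
        le_trans (Cardinal.mk_le_mk_of_subset hunion) (Cardinal.mk_union_le _ _)
      have h2 : Cardinal.mk (Set.Iio β) = Cardinal.aleph.{u+1} (k + 1) := by
        simp [hβ, Ordinal.mk_Iio_ordinal]
      rw [h2, hmkIio] at h1
      have h3 : Cardinal.aleph.{u+1} k + Cardinal.mk (Set.Ico α β) <
          Cardinal.aleph.{u+1} (k + 1) := by
        apply Cardinal.add_lt_of_lt (Cardinal.aleph0_le_aleph _)
        · exact Cardinal.aleph_lt_aleph.mpr (by exact_mod_cast Nat.lt_succ_self k)
        · exact hle
      exact absurd h1 (not_le.mpr h3)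
    have hlt : Cardinal.mk (Finset (Set.Iio α) × Finset (Set.Iio α)) <
        Cardinal.mk (Set.Ico α β) := by
      rw [hcodom]
      exact lt_of_lt_of_le
        (Cardinal.aleph_lt_aleph.mpr (by exact_mod_cast Nat.lt_succ_self k)) hdom
    obtain ⟨⟨X, B⟩, hXB⟩ := Cardinal.exists_infinite_fiber' f hlt
    have hinffib : (f ⁻¹' {(X, B)}).Infinite := Set.infinite_coe_iff.mp hXB
    obtain ⟨δ0, hδ0⟩ := hinffib.nonempty
    set B' : Finset Ordinal.{u} := σ (insert (δ0 : Ordinal) (x δ0)) with hB'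
    have hfib : ∀ δ : Set.Ico α β, δ ∈ f ⁻¹' {(X, B)} →
        x δ = x δ0 ∧ σ (insert (δ : Ordinal) (x δ)) = B' := by
      intro δ hδ
      simp only [Set.mem_preimage, Set.mem_singleton_iff, hf, Prod.mk.injEq] at hδ hδ0
      constructor
      · exact finset_subtype_inj (fun a ha => hx2 δ ha) (fun a ha => hx2 δ0 ha)
          (hδ.1.trans hδ0.1.symm)
      · rw [hB']
        exact finset_subtype_inj (fun a ha => hσsub δ ha) (fun a ha => hσsub δ0 ha)
          (hδ.2.trans hδ0.2.symm)
    have hmap : Set.MapsTo (fun δ : Set.Ico α β => insert (δ : Ordinal) (x δ0))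
        (f ⁻¹' {(X, B)})
        {s : Finset Ordinal.{u} | s.card = m + 1 ∧
          (s : Set Ordinal.{u}) ⊆ Set.Iio β ∧ σ s = B'} := by
      intro δ hδ
      obtain ⟨hxeq, hσeq⟩ := hfib δ hδ
      have hnot : (δ : Ordinal) ∉ x δ0 := by
        intro hmem
        exact absurd (hx2 δ0 hmem) (not_lt.mpr δ.2.1)
      refine ⟨?_, ?_, ?_⟩
      · rw [Finset.card_insert_of_notMem hnot, hx1]
      · intro a ha
        simp only [Finset.coe_insert, Set.mem_insert_iff] at ha
        rcases ha with rfl | ha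
        · exact δ.2.2
        · exact hio (hx2 δ0 ha)
      · rw [← hxeq]; exact hσeq
    have hinj : Set.InjOn (fun δ : Set.Ico α β => insert (δ : Ordinal) (x δ0))
        (f ⁻¹' {(X, B)}) := by
      intro δ1 _ δ2 _ h
      have h2 : insert (δ1 : Ordinal) (x δ0) = insert (δ2 : Ordinal) (x δ0) := h
      have hn1 : (δ1 : Ordinal) ∉ x δ0 := fun hm => absurd (hx2 δ0 hm) (not_lt.mpr δ1.2.1)
      have hmem : (δ1 : Ordinal) ∈ insert (δ2 : Ordinal) (x δ0) := by
        rw [← h2]; exact Finset.mem_insert_self _ _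
      rw [Finset.mem_insert] at hmem
      rcases hmem with heq | hmem
      · exact Subtype.ext heq
      · exact absurd hmem hn1
    exact ((hinffib.image hinj).mono hmap.image_subset) (hfin B')
  obtain ⟨δ, hδ1, hδ2, hδ3⟩ := key
  refine ⟨Set.Iio α, hmkIio, fun s => (σ (insert δ s)).erase δ, ?_, ?_⟩
  · intro s hcard hsub
    have hδns : δ ∉ s := fun hm => absurd (hsub hm) (not_lt.mpr hδ1)
    have hcard' : (insert δ s).card = m + 1 := by
      rw [Finset.card_insert_of_notMem hδns, hcard]
    have hsub' : (↑(insert δ s) : Set Ordinal) ⊆ Set.Iio β := by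
      intro a ha
      simp only [Finset.coe_insert, Set.mem_insert_iff] at ha
      rcases ha with rfl | ha
      · exact hδ2
      · exact hio (hsub ha)
    obtain ⟨h1, h2⟩ := hσ _ hcard' hsub'
    constructor
    · intro a ha
      rw [Finset.mem_erase] at ha
      have := h1 ha.2
      rw [Finset.mem_insert] at this
      rcases this with rfl | hm
      · exact absurd rfl ha.1
      · exact hm
    · rw [Finset.card_erase_of_mem (hδ3 s hcard hsub), h2]
      omega
  · intro B
    set T := {s : Finset Ordinal.{u} | s.card = m + 1 ∧
        (s : Set Ordinal.{u}) ⊆ Set.Iio β ∧ σ s = insert δ B} with hT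
    set A := {s : Finset Ordinal.{u} | s.card = m ∧ (s : Set Ordinal.{u}) ⊆ Set.Iio α ∧
        (σ (insert δ s)).erase δ = B} with hA
    have himg : (fun s => insert δ s) '' A ⊆ T := by
      rintro _ ⟨s, ⟨hcard, hsub, hB⟩, rfl⟩
      have hδns : δ ∉ s := fun hm => absurd (hsub hm) (not_lt.mpr hδ1)
      refine ⟨by rw [Finset.card_insert_of_notMem hδns, hcard], ?_, ?_⟩
      · intro a ha
        simp only [Finset.coe_insert, Set.mem_insert_iff] at ha
        rcases ha with rfl | ha
        · exact hδ2
        · exact hio (hsub ha)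
      · rw [← hB, Finset.insert_erase (hδ3 s hcard hsub)]
    have hinj : Set.InjOn (fun s => insert δ s) A := by
      intro s1 h1 s2 h2 h
      have hn1 : δ ∉ s1 := fun hm => absurd (h1.2.1 hm) (not_lt.mpr hδ1)
      have hn2 : δ ∉ s2 := fun hm => absurd (h2.2.1 hm) (not_lt.mpr hδ1)
      have h' : insert δ s1 = insert δ s2 := h
      have := congrArg (Finset.erase · δ) h'
      simpa [Finset.erase_insert hn1, Finset.erase_insert hn2] using this
    exact Set.Finite.of_finite_image ((hfin (insert δ B)).subset himg) hinj

lemma exists_down (γ : Ordinal.{u}) (γ' : Ordinal.{v})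
    (h : Ordinal.lift.{v} γ = Ordinal.lift.{u} γ') :
    ∃ e : Ordinal.{u} → Ordinal.{v}, ∀ o < γ,
      Ordinal.lift.{u} (e o) = Ordinal.lift.{v} o ∧ e o < γ' := by
  classical
  have hch : ∀ o : Ordinal.{u}, ∃ o' : Ordinal.{v},
      o < γ → Ordinal.lift.{u} o' = Ordinal.lift.{v} o ∧ o' < γ' := by
    intro o
    by_cases ho : o < γ
    · have hle : Ordinal.lift.{v} o ≤ Ordinal.lift.{u} γ' := by
        rw [← h]
        exact le_of_lt (Ordinal.lift_lt.mpr ho)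
      obtain ⟨o', ho'⟩ := Ordinal.mem_range_lift_of_le hle
      refine ⟨o', fun _ => ⟨ho', ?_⟩⟩
      have hlt : Ordinal.lift.{u} o' < Ordinal.lift.{u} γ' := by
        rw [ho', ← h]
        exact Ordinal.lift_lt.mpr ho
      exact Ordinal.lift_lt.mp hlt
    · exact ⟨0, fun hc => absurd hc ho⟩
  choose e he using hch
  exact ⟨e, fun o ho => he o ho⟩

lemma main_compression.{u1, u2} (k l m : ℕ) (hml : m > l)
    (σ : Finset Ordinal.{u1} → Finset Ordinal.{u1})
    (hσ : ∀ s : Finset Ordinal.{u1}, s.card = m + 1 →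
      (s : Set Ordinal.{u1}) ⊆ Set.Iio (Cardinal.aleph.{u1} (k + 1)).ord →
      σ s ⊆ s ∧ (σ s).card = l + 1)
    (hfin : ∀ B : Finset Ordinal.{u1},
      {s : Finset Ordinal.{u1} | s.card = m + 1 ∧
        (s : Set Ordinal.{u1}) ⊆ Set.Iio (Cardinal.aleph.{u1} (k + 1)).ord ∧ σ s = B}.Finite) :
    ∃ Y : Set Ordinal.{u2}, Cardinal.mk Y = Cardinal.aleph.{u2+1} k ∧
      ∃ ς : Finset Ordinal.{u2} → Finset Ordinal.{u2},
        (∀ s : Finset Ordinal.{u2}, s.card = m → (s : Set Ordinal.{u2}) ⊆ Y →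
          ς s ⊆ s ∧ (ς s).card = l) ∧
        ∀ B : Finset Ordinal.{u2},
          {s : Finset Ordinal.{u2} | s.card = m ∧ (s : Set Ordinal.{u2}) ⊆ Y ∧ ς s = B}.Finite := by
  classical
  set β₁ : Ordinal.{u1} := (Cardinal.aleph.{u1} (k + 1)).ord with hβ₁
  set β₂ : Ordinal.{u2} := (Cardinal.aleph.{u2} (k + 1)).ord with hβ₂
  have hlift : Ordinal.lift.{u1} β₂ = Ordinal.lift.{u2} β₁ := by
    simp [hβ₁, hβ₂, Cardinal.lift_ord, Cardinal.lift_aleph]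
  obtain ⟨e, he⟩ := exists_down β₂ β₁ hlift
  obtain ⟨d, hd⟩ := exists_down β₁ β₂ hlift.symm
  have hde : ∀ o < β₂, d (e o) = o := by
    intro o ho
    have h1 := he o ho
    have h2 := hd (e o) h1.2
    exact Ordinal.lift_inj.mp (h2.1.trans h1.1)
  have hed : ∀ o < β₁, e (d o) = o := by
    intro o ho
    have h1 := hd o ho
    have h2 := he (d o) h1.2
    exact Ordinal.lift_inj.mp (h2.1.trans h1.1)
  set σ₂ : Finset Ordinal.{u2} → Finset Ordinal.{u2} :=
    fun s => (σ (s.image e)).image d with hσ₂def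
  have himg_sub : ∀ s : Finset Ordinal.{u2}, (s : Set Ordinal.{u2}) ⊆ Set.Iio β₂ →
      ((s.image e : Finset Ordinal.{u1}) : Set Ordinal.{u1}) ⊆ Set.Iio β₁ := by
    intro s hs a ha
    rw [Finset.coe_image] at ha
    obtain ⟨b, hb, rfl⟩ := ha
    exact (he b (hs hb)).2
  have hinje : ∀ s : Finset Ordinal.{u2}, (s : Set Ordinal.{u2}) ⊆ Set.Iio β₂ →
      Set.InjOn e (s : Set Ordinal.{u2}) := by
    intro s hs a ha b hb hab
    rw [← hde a (hs ha), ← hde b (hs hb), hab]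
  have hinjd : ∀ t : Finset Ordinal.{u1}, (t : Set Ordinal.{u1}) ⊆ Set.Iio β₁ →
      Set.InjOn d (t : Set Ordinal.{u1}) := by
    intro t ht a ha b hb hab
    rw [← hed a (ht ha), ← hed b (ht hb), hab]
  have hback : ∀ s : Finset Ordinal.{u2}, (s : Set Ordinal.{u2}) ⊆ Set.Iio β₂ →
      (s.image e).image d = s := by
    intro s hs
    ext a
    simp only [Finset.image_image, Finset.mem_image, Function.comp_apply]
    constructor
    · rintro ⟨b, hb, rfl⟩
      rw [hde b (hs hb)]; exact hb
    · intro ha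
      exact ⟨a, ha, hde a (hs ha)⟩
  have hback' : ∀ t : Finset Ordinal.{u1}, (t : Set Ordinal.{u1}) ⊆ Set.Iio β₁ →
      (t.image d).image e = t := by
    intro t ht
    ext a
    simp only [Finset.image_image, Finset.mem_image, Function.comp_apply]
    constructor
    · rintro ⟨b, hb, rfl⟩
      rw [hed b (ht hb)]; exact hb
    · intro ha
      exact ⟨a, ha, hed a (ht ha)⟩
  have hσ₂ : ∀ s : Finset Ordinal.{u2}, s.card = m + 1 →
      (s : Set Ordinal.{u2}) ⊆ Set.Iio β₂ → σ₂ s ⊆ s ∧ (σ₂ s).card = l + 1 := by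
    intro s hcard hsub
    have hcard' : (s.image e).card = m + 1 := by
      rw [Finset.card_image_of_injOn (hinje s hsub), hcard]
    obtain ⟨h1, h2⟩ := hσ (s.image e) hcard' (himg_sub s hsub)
    have hσsub : ((σ (s.image e) : Finset Ordinal.{u1}) : Set Ordinal.{u1}) ⊆ Set.Iio β₁ := by
      intro a ha
      exact himg_sub s hsub (Finset.coe_subset.mpr h1 ha)
    constructor
    · intro a ha
      rw [hσ₂def] at ha
      simp only [Finset.mem_image] at ha
      obtain ⟨b, hb, rfl⟩ := ha
      have hbs := h1 hb
      rw [Finset.mem_image] at hbs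
      obtain ⟨c, hc, rfl⟩ := hbs
      rwa [hde c (hsub hc)]
    · rw [hσ₂def]
      simp only
      rw [Finset.card_image_of_injOn (hinjd _ hσsub), h2]
  have hfin₂ : ∀ B : Finset Ordinal.{u2},
      {s : Finset Ordinal.{u2} | s.card = m + 1 ∧
        (s : Set Ordinal.{u2}) ⊆ Set.Iio β₂ ∧ σ₂ s = B}.Finite := by
    intro B
    set A := {s : Finset Ordinal.{u2} | s.card = m + 1 ∧
        (s : Set Ordinal.{u2}) ⊆ Set.Iio β₂ ∧ σ₂ s = B} with hA
    have himg : (fun s : Finset Ordinal.{u2} => s.image e) '' A ⊆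
        {t : Finset Ordinal.{u1} | t.card = m + 1 ∧
          (t : Set Ordinal.{u1}) ⊆ Set.Iio β₁ ∧ σ t = B.image e} := by
      rintro _ ⟨s, ⟨hcard, hsub, hB⟩, rfl⟩
      refine ⟨by rw [Finset.card_image_of_injOn (hinje s hsub), hcard], himg_sub s hsub, ?_⟩
      have h1 := (hσ (s.image e)
        (by rw [Finset.card_image_of_injOn (hinje s hsub), hcard]) (himg_sub s hsub)).1
      have hσsub : ((σ (s.image e) : Finset Ordinal.{u1}) : Set Ordinal.{u1}) ⊆ Set.Iio β₁ :=
        fun a ha => himg_sub s hsub (Finset.coe_subset.mpr h1 ha)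
      rw [← hB, hσ₂def]
      simp only
      rw [hback' _ hσsub]
    have hinj : Set.InjOn (fun s : Finset Ordinal.{u2} => s.image e) A := by
      intro s1 h1 s2 h2 h
      have h' : s1.image e = s2.image e := h
      rw [← hback s1 h1.2.1, ← hback s2 h2.2.1, h']
    exact Set.Finite.of_finite_image ((hfin (B.image e)).subset himg) hinj
  exact core_compression k l m hml σ₂ hσ₂ hfin₂


theorem stmt_11 (k l m : ℕ) (hml : m > l)
    (σ : Finset Ordinal → Finset Ordinal)
    (hσ : ∀ s : Finset Ordinal, s.card = m + 1 →
      (s : Set Ordinal) ⊆ Set.Iio (Cardinal.aleph (k + 1)).ord →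
      σ s ⊆ s ∧ (σ s).card = l + 1)
    (hfin : ∀ B : Finset Ordinal,
      {s : Finset Ordinal | s.card = m + 1 ∧
        (s : Set Ordinal) ⊆ Set.Iio (Cardinal.aleph (k + 1)).ord ∧ σ s = B}.Finite) :
    ∃ Y : Set Ordinal, Cardinal.mk Y = Cardinal.aleph k ∧
      ∃ ς : Finset Ordinal → Finset Ordinal,
        (∀ s : Finset Ordinal, s.card = m → (s : Set Ordinal) ⊆ Y →
          ς s ⊆ s ∧ (ς s).card = l) ∧
        ∀ B : Finset Ordinal,
          {s : Finset Ordinal | s.card = m ∧ (s : Set Ordinal) ⊆ Y ∧ ς s = B}.Finite :=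
  main_compression k l m hml σ hσ hfin
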